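/- Let (α_n) be a sequence of geodesic rays with common basepoint in a CAT(0) space with block structure, converging uniformly on compacts to a geodesic ray α with infinite itinerary [B_1, B_2, …]. Then for every block B in the itinerary of α, B belongs to the itinerary of α_n for all sufficiently large n. -/
import Mathlib


/-- A geodesic ray: unit-speed geodesic on `[0, ∞)`. -/
def IsGeodesicRay {X : Type*} [MetricSpace X] (α : ℝ → X) : Prop :=
  ∀ s t : ℝ, 0 ≤ s → 0 ≤ t → dist (α s) (α t) = |s - t|

/-- The ray `α` *enters* the block `B i` at time `t`: it passes through a point of
`B i` lying in no other block. -/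
def Enters {X ι : Type*} [MetricSpace X] (B : ι → Set X) (α : ℝ → X) (t : ℝ) (i : ι) :
    Prop :=
  α t ∈ B i ∧ ∀ j, j ≠ i → α t ∉ B j

/-- A block structure on a metric space `X` (closed convex cover, parity condition,
`ε`-separation condition, each block meeting at least two others). -/
structure BlockStructure (X : Type*) [MetricSpace X] (ι : Type*) where
  B : ι → Set X
  closed : ∀ i, IsClosed (B i)
  convex : ∀ i, ∀ x ∈ B i, ∀ y ∈ B i, ∀ z : X, dist x z + dist z y = dist x y → z ∈ B i
  cover : ∀ x : X, ∃ i, x ∈ B i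
  meetsTwo : ∀ i, ∃ j k, j ≠ i ∧ k ≠ i ∧ j ≠ k ∧
    (B i ∩ B j).Nonempty ∧ (B i ∩ B k).Nonempty
  parity : ι → Bool
  parityCond : ∀ i j, i ≠ j → (B i ∩ B j).Nonempty → parity i ≠ parity j
  eps : ℝ
  epsPos : 0 < eps
  epsCond : ∀ i j, (B i ∩ B j).Nonempty ↔
    (Metric.thickening eps (B i) ∩ Metric.thickening eps (B j)).Nonempty


/-- Let `(α_n)` be geodesic rays with common basepoint converging (uniformly on
compact sets) to a geodesic ray `α` with infinite itinerary.  Then every block in the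
itinerary of `α` belongs to the itinerary of `α_n` for all sufficiently large `n`. -/
theorem stmt11 {X ι : Type*} [MetricSpace X] (bs : BlockStructure X ι)
    (α : ℝ → X) (hα : IsGeodesicRay α)
    (αseq : ℕ → ℝ → X) (hαseq : ∀ n, IsGeodesicRay (αseq n))
    (hbase : ∀ n, αseq n 0 = α 0)
    (hconv : ∀ T > (0 : ℝ), ∀ ε > (0 : ℝ), ∃ N : ℕ, ∀ n ≥ N,
      ∀ t ∈ Set.Icc (0 : ℝ) T, dist (αseq n t) (α t) < ε)
    (hirr : {i : ι | ∃ t : ℝ, 0 ≤ t ∧ Enters bs.B α t i}.Infinite) :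
    ∀ i : ι, (∃ t : ℝ, 0 ≤ t ∧ Enters bs.B α t i) →
      ∃ N : ℕ, ∀ n ≥ N, ∃ t : ℝ, 0 ≤ t ∧ Enters bs.B (αseq n) t i := by
  intro i ⟨t, ht, hmem, honly⟩
  classical
  set x := α t with hx
  -- x is in the eps-thickening of B i
  have hxthick : x ∈ Metric.thickening bs.eps (bs.B i) :=
    Metric.self_subset_thickening bs.epsPos _ hmem
  -- find a radius r such that the ball of radius r around x meets no block j ≠ i
  have key : ∃ r > 0, ∀ y : X, dist y x < r → ∀ j, j ≠ i → y ∉ bs.B j := by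
    by_cases hA : ∃ j0, j0 ≠ i ∧ x ∈ Metric.thickening bs.eps (bs.B j0)
    · obtain ⟨j0, hj0i, hj0t⟩ := hA
      have hxnot : x ∉ bs.B j0 := honly j0 hj0i
      have hopen : IsOpen (bs.B j0)ᶜ := (bs.closed j0).isOpen_compl
      obtain ⟨r0, hr0, hball⟩ := Metric.isOpen_iff.1 hopen x hxnot
      refine ⟨min bs.eps r0, lt_min bs.epsPos hr0, ?_⟩
      intro y hy j hji hyB
      have hyeps : dist y x < bs.eps := lt_of_lt_of_le hy (min_le_left _ _)
      have hxj : x ∈ Metric.thickening bs.eps (bs.B j) := by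
        rw [Metric.mem_thickening_iff]
        exact ⟨y, hyB, by rwa [dist_comm]⟩
      by_cases hjj0 : j = j0
      · subst hjj0
        exact (hball (Metric.mem_ball.2 (lt_of_lt_of_le hy (min_le_right _ _)))) hyB
      · -- both j and j0 meet B i, hence have parity ≠ parity i, so parity j = parity j0;
        -- but B j meets B j0 (thickenings meet at x), contradiction
        have hjI : (bs.B j ∩ bs.B i).Nonempty :=
          (bs.epsCond j i).2 ⟨x, hxj, hxthick⟩
        have hj0I : (bs.B j0 ∩ bs.B i).Nonempty :=
          (bs.epsCond j0 i).2 ⟨x, hj0t, hxthick⟩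
        have hjj0' : (bs.B j ∩ bs.B j0).Nonempty :=
          (bs.epsCond j j0).2 ⟨x, hxj, hj0t⟩
        have h1 : bs.parity j ≠ bs.parity i := bs.parityCond j i hji hjI
        have h2 : bs.parity j0 ≠ bs.parity i := bs.parityCond j0 i hj0i hj0I
        have h3 : bs.parity j ≠ bs.parity j0 := bs.parityCond j j0 hjj0 hjj0'
        revert h1 h2 h3
        cases bs.parity j <;> cases bs.parity j0 <;> cases bs.parity i <;> simp
    · refine ⟨bs.eps, bs.epsPos, ?_⟩
      intro y hy j hji hyB
      exact hA ⟨j, hji, by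
        rw [Metric.mem_thickening_iff]
        exact ⟨y, hyB, by rwa [dist_comm]⟩⟩
  obtain ⟨r, hr, hball⟩ := key
  obtain ⟨N, hN⟩ := hconv (t + 1) (by linarith) r hr
  refine ⟨N, fun n hn => ⟨t, ht, ?_, ?_⟩⟩
  · -- αseq n t lies in some block; it cannot be any j ≠ i, so it is B i
    obtain ⟨k, hk⟩ := bs.cover (αseq n t)
    have hd : dist (αseq n t) x < r := hN n hn t ⟨ht, by linarith⟩
    by_cases hki : k = i
    · rwa [hki] at hk
    · exact absurd hk (hball _ hd k hki)
  · intro j hji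
    have hd : dist (αseq n t) x < r := hN n hn t ⟨ht, by linarith⟩
    exact hball _ hd j hji
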